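/- Let S be a nonempty closed proper subset of ℝⁿ. Let Q and Q' be Whitney-type cubes for S (i.e., diam Q ≤ dist(Q,S) ≤ 4 diam Q and similarly for Q') with Q ∩ Q' ≠ ∅ and r_{Q'} ≤ r_Q, and let a_Q, a_{Q'} ∈ S be nearest points of S to Q and to Q' respectively. Set Q̃ := Q(a_Q, 10 diam Q). Then: (i) a_{Q'} ∈ Q̃; (ii) for every β ∈ (0, 3/20) and every η ∈ (0,1], the cube ηQ̃ is β-porous with respect to S; (iii) for every ς ∈ (0,3), ςQ ⊆ Q̃ and ςQ ∩ S = ∅. -/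

import Mathlib

open MeasureTheory Metric Set
open scoped ENNReal

/-- A closed cube `Q(c, r)` in `ℝⁿ` (with the uniform norm): center `c`, radius `r`. -/
structure PCube (n : ℕ) where
  c : Fin n → ℝ
  r : ℝ

namespace PCube

variable {n : ℕ}

/-- The underlying set of the cube. -/
def toSet (Q : PCube n) : Set (Fin n → ℝ) := Metric.closedBall Q.c Q.r

/-- The diameter `2r` of the cube (uniform norm). -/
def diam (Q : PCube n) : ℝ := 2 * Q.r

/-- Dilation `λQ` of the cube about its center. -/
def scale (Q : PCube n) (l : ℝ) : PCube n := ⟨Q.c, l * Q.r⟩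

/-- The volume `|Q| = (2r)ⁿ` of the cube. -/
def vol (Q : PCube n) : ℝ := (2 * Q.r) ^ n

end PCube

/-- Distance between two subsets of `ℝⁿ`. -/
noncomputable def setDist {n : ℕ} (A B : Set (Fin n → ℝ)) : ℝ :=
  sInf (Set.image2 dist A B)

/-- Oscillation `E(f; U)` of `f` on `U`. -/
noncomputable def osc {n : ℕ} (f : (Fin n → ℝ) → ℝ) (U : Set (Fin n → ℝ)) : ℝ :=
  sSup ((fun q : (Fin n → ℝ) × (Fin n → ℝ) => |f q.1 - f q.2|) '' (U ×ˢ U))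

/-- `Q` is `α`-porous with respect to `S`. -/
def Porous {n : ℕ} (α : ℝ) (S : Set (Fin n → ℝ)) (Q : PCube n) : Prop :=
  ∃ Q' : PCube n, 0 < Q'.r ∧ Q'.toSet ⊆ Q.toSet \ S ∧ α * Q.diam ≤ Q'.diam

/-- `‖∇F(x)‖ = max_i |∂F/∂x_i(x)|`. -/
noncomputable def gradNorm {n : ℕ} (F : (Fin n → ℝ) → ℝ) (x : Fin n → ℝ) : ℝ :=
  ‖fun i : Fin n => fderiv ℝ F x (Pi.single i 1)‖

/-- A packing: a finite family of nondegenerate, pairwise disjoint cubes. -/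
def IsPacking {n : ℕ} (π : Finset (PCube n)) : Prop :=
  (∀ Q ∈ π, 0 < Q.r) ∧ ∀ Q ∈ π, ∀ Q' ∈ π, Q ≠ Q' → Disjoint Q.toSet Q'.toSet

/-- All cubes in the family have equal diameter. -/
def EqualDiam {n : ℕ} (π : Finset (PCube n)) : Prop :=
  ∀ Q ∈ π, ∀ Q' ∈ π, Q.r = Q'.r

/-- The functional `A_p(f; t : S)` (via local oscillations). -/
noncomputable def Ap {n : ℕ} (p : ℝ) (f : (Fin n → ℝ) → ℝ) (t : ℝ)
    (S : Set (Fin n → ℝ)) : ℝ≥0∞ :=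
  ⨆ π ∈ {π : Finset (PCube n) | IsPacking π ∧ EqualDiam π ∧ (∀ Q ∈ π, Q.c ∈ S) ∧
      ∀ Q ∈ π, Q.diam ≤ t},
    ENNReal.ofReal ((∑ Q ∈ π, Q.vol * osc f (Q.toSet ∩ S) ^ p) ^ (1 / p))

/-- `𝔸_{p,α}(f; t : S)`: as `A_p` but over `α`-porous packings. -/
noncomputable def ApPorous {n : ℕ} (p α : ℝ) (f : (Fin n → ℝ) → ℝ) (t : ℝ)
    (S : Set (Fin n → ℝ)) : ℝ≥0∞ :=
  ⨆ π ∈ {π : Finset (PCube n) | IsPacking π ∧ EqualDiam π ∧ (∀ Q ∈ π, Q.c ∈ S) ∧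
      (∀ Q ∈ π, Q.diam ≤ t) ∧ ∀ Q ∈ π, Porous α S Q},
    ENNReal.ofReal ((∑ Q ∈ π, Q.vol * osc f (Q.toSet ∩ S) ^ p) ^ (1 / p))

/-- `E(f; Q)_{L_p(μ)}`. -/
noncomputable def oscLp {n : ℕ} (μ : Measure (Fin n → ℝ)) (p : ℝ) (f : (Fin n → ℝ) → ℝ)
    (Q : PCube n) : ℝ≥0∞ :=
  ((μ Q.toSet)⁻¹ ^ 2 *
    ∫⁻ x in Q.toSet, ∫⁻ y in Q.toSet, ENNReal.ofReal (|f x - f y| ^ p) ∂μ ∂μ) ^ (1 / p)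

/-- `A_p(f; t : S)_{L_p(μ)}`. -/
noncomputable def ApLp {n : ℕ} (μ : Measure (Fin n → ℝ)) (p : ℝ) (f : (Fin n → ℝ) → ℝ)
    (t : ℝ) (S : Set (Fin n → ℝ)) : ℝ≥0∞ :=
  ⨆ π ∈ {π : Finset (PCube n) | IsPacking π ∧ EqualDiam π ∧ (∀ Q ∈ π, Q.c ∈ S) ∧
      ∀ Q ∈ π, Q.diam ≤ t},
    (∑ Q ∈ π, ENNReal.ofReal Q.vol * oscLp μ p f Q ^ p) ^ (1 / p)

/-- `𝒜_{p,α}(f; t : S)_{L_p(μ)}`: over `α`-porous packings centered at the boundary of `S`. -/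
noncomputable def AcalLp {n : ℕ} (μ : Measure (Fin n → ℝ)) (p α : ℝ) (f : (Fin n → ℝ) → ℝ)
    (t : ℝ) (S : Set (Fin n → ℝ)) : ℝ≥0∞ :=
  ⨆ π ∈ {π : Finset (PCube n) | IsPacking π ∧ EqualDiam π ∧ (∀ Q ∈ π, Q.c ∈ frontier S) ∧
      (∀ Q ∈ π, Q.diam ≤ t) ∧ ∀ Q ∈ π, Porous α S Q},
    (∑ Q ∈ π, ENNReal.ofReal Q.vol * oscLp μ p f Q ^ p) ^ (1 / p)

/-- `ρ_{α,S}(x,y) ∈ [0,∞]`. -/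
noncomputable def rho {n : ℕ} (α : ℝ) (S : Set (Fin n → ℝ)) (x y : Fin n → ℝ) : ℝ≥0∞ :=
  sInf {d : ℝ≥0∞ | ∃ Q : PCube n, 0 < Q.r ∧ x ∈ Q.toSet ∧ y ∈ Q.toSet ∧
    (Q.scale α).toSet ⊆ Sᶜ ∧ d = ENNReal.ofReal Q.diam}

/-- The sharp maximal function `f^♯_{∞,S}`. -/
noncomputable def sharpMax {n : ℕ} (S : Set (Fin n → ℝ)) (f : (Fin n → ℝ) → ℝ)
    (x : Fin n → ℝ) : ℝ :=
  sSup {v : ℝ | ∃ r : ℝ, 0 < r ∧ ∃ y ∈ Metric.closedBall x r ∩ S,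
    ∃ z ∈ Metric.closedBall x r ∩ S, v = |f y - f z| / r}

/-- `supp μ = S`. -/
def IsSuppOn {n : ℕ} (μ : Measure (Fin n → ℝ)) (S : Set (Fin n → ℝ)) : Prop :=
  μ Sᶜ = 0 ∧ ∀ x ∈ S, ∀ r : ℝ, 0 < r → 0 < μ (Metric.closedBall x r)

/-- The doubling condition (1.12). -/
def Doubling {n : ℕ} (μ : Measure (Fin n → ℝ)) (S : Set (Fin n → ℝ)) (cμ : ℝ) : Prop :=
  ∀ x ∈ S, ∀ r : ℝ, 0 < r → r ≤ 1 / 2 →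
    μ (Metric.closedBall x (2 * r)) ≤ ENNReal.ofReal cμ * μ (Metric.closedBall x r)

/-- Condition `(D_n)` (1.11). -/
def CondDn {n : ℕ} (μ : Measure (Fin n → ℝ)) (S : Set (Fin n → ℝ)) (Cμ : ℝ) : Prop :=
  ∀ x ∈ S, ∀ r : ℝ, 0 < r → r ≤ 1 → ∀ k : ℝ, 1 ≤ k → k ≤ 1 / r →
    μ (Metric.closedBall x (k * r)) ≤ ENNReal.ofReal (Cμ * k ^ n) * μ (Metric.closedBall x r)

/-- The normalization condition (1.13). -/
def Normalized {n : ℕ} (μ : Measure (Fin n → ℝ)) (S : Set (Fin n → ℝ)) (C' C'' : ℝ) : Prop :=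
  ∀ x ∈ S, ENNReal.ofReal C' ≤ μ (Metric.closedBall x 1) ∧
    μ (Metric.closedBall x 1) ≤ ENNReal.ofReal C''

/-- The double integral over `{‖x−y‖ < t}` (before taking the `1/p` power). -/
noncomputable def I1 {n : ℕ} (μ : Measure (Fin n → ℝ)) (p : ℝ) (S : Set (Fin n → ℝ))
    (f : (Fin n → ℝ) → ℝ) (t : ℝ) : ℝ≥0∞ :=
  ∫⁻ x in S, ∫⁻ y in S,
    ({y : Fin n → ℝ | dist x y < t}.indicator
      (fun y => ENNReal.ofReal (|f x - f y| ^ p) * ENNReal.ofReal (t ^ ((n : ℝ) - p)) *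
        ((μ (Metric.closedBall x t))⁻¹) ^ 2)) y ∂μ ∂μ

/-- The double integral over `{ρ_{α,S}(x,y) < δ}` (before taking the `1/p` power). -/
noncomputable def I2 {n : ℕ} (μ : Measure (Fin n → ℝ)) (p α : ℝ) (S : Set (Fin n → ℝ))
    (f : (Fin n → ℝ) → ℝ) (δ : ℝ) : ℝ≥0∞ :=
  ∫⁻ x in S, ∫⁻ y in S,
    ({y : Fin n → ℝ | rho α S x y < ENNReal.ofReal δ}.indicator
      (fun y => ENNReal.ofReal (|f x - f y| ^ p) * rho α S x y ^ ((n : ℝ) - p) *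
        ((μ (Metric.closedBall x (rho α S x y).toReal))⁻¹) ^ 2)) y ∂μ ∂μ


private lemma aux_infDist_closedBall_le {E : Type*} [NormedAddCommGroup E] [NormedSpace ℝ E]
    (y c : E) (r : ℝ) (hr : 0 ≤ r) (h : r ≤ dist y c) :
    Metric.infDist y (Metric.closedBall c r) ≤ dist y c - r := by
  rcases eq_or_lt_of_le (hr.trans h) with h0 | h0
  · have hy : y ∈ Metric.closedBall c r := by
      rw [Metric.mem_closedBall]; linarith
    have := Metric.infDist_zero_of_mem hy
    linarith
  · set D := dist y c with hD
    have hDpos : 0 < D := h0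
    set z := c + (r / D) • (y - c) with hz
    have hzmem : z ∈ Metric.closedBall c r := by
      rw [Metric.mem_closedBall, dist_eq_norm]
      have : z - c = (r / D) • (y - c) := by rw [hz]; abel
      rw [this, norm_smul]
      have : ‖y - c‖ = D := by rw [hD, dist_eq_norm]
      rw [this, Real.norm_eq_abs, abs_of_nonneg (by positivity)]
      rw [div_mul_cancel₀ _ hDpos.ne']
    have hdyz : dist y z = D - r := by
      rw [dist_eq_norm]
      have hyz : y - z = (1 - r / D) • (y - c) := by
        rw [hz, sub_smul, one_smul]; abel
      rw [hyz, norm_smul]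
      have hnyc : ‖y - c‖ = D := by rw [hD, dist_eq_norm]
      rw [hnyc, Real.norm_eq_abs, abs_of_nonneg (by
        have : r / D ≤ 1 := (div_le_one hDpos).mpr h
        linarith)]
      field_simp
    calc Metric.infDist y (Metric.closedBall c r) ≤ dist y z :=
          Metric.infDist_le_dist_of_mem hzmem
      _ = D - r := hdyz

set_option maxHeartbeats 2000000 in
theorem statement9 (n : ℕ) (S : Set (Fin n → ℝ)) (hne : S.Nonempty) (hcl : IsClosed S)
    (hproper : S ≠ Set.univ)
    (Q Q' : PCube n) (hQr : 0 < Q.r) (hQ'r : 0 < Q'.r)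
    (hQ1 : Q.diam ≤ setDist Q.toSet S) (hQ2 : setDist Q.toSet S ≤ 4 * Q.diam)
    (hQ'1 : Q'.diam ≤ setDist Q'.toSet S) (hQ'2 : setDist Q'.toSet S ≤ 4 * Q'.diam)
    (hmeet : (Q.toSet ∩ Q'.toSet).Nonempty) (hrr : Q'.r ≤ Q.r)
    (a a' : Fin n → ℝ) (haS : a ∈ S) (ha'S : a' ∈ S)
    (ha : Metric.infDist a Q.toSet = setDist Q.toSet S)
    (ha' : Metric.infDist a' Q'.toSet = setDist Q'.toSet S) :
    a' ∈ (PCube.mk a (10 * Q.diam)).toSet ∧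
    (∀ β : ℝ, 0 < β → β < 3 / 20 → ∀ η : ℝ, 0 < η → η ≤ 1 →
      Porous β S ((PCube.mk a (10 * Q.diam)).scale η)) ∧
    (∀ ς : ℝ, 0 < ς → ς < 3 →
      (Q.scale ς).toSet ⊆ (PCube.mk a (10 * Q.diam)).toSet ∧
        (Q.scale ς).toSet ∩ S = ∅) := by
  classical
  set d := setDist Q.toSet S with hd
  set d' := setDist Q'.toSet S with hd'
  -- setDist lower bound
  have hdle : ∀ q ∈ Q.toSet, ∀ y ∈ S, d ≤ dist q y := by
    intro q hq y hy
    exact csInf_le ⟨0, by rintro _ ⟨x, hx, w, hw, rfl⟩; exact dist_nonneg⟩ ⟨q, hq, y, hy, rfl⟩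
  have hd'le : ∀ q ∈ Q'.toSet, ∀ y ∈ S, d' ≤ dist q y := by
    intro q hq y hy
    exact csInf_le ⟨0, by rintro _ ⟨x, hx, w, hw, rfl⟩; exact dist_nonneg⟩ ⟨q, hq, y, hy, rfl⟩
  have hQne : Q.toSet.Nonempty := ⟨Q.c, Metric.mem_closedBall_self hQr.le⟩
  have hQ'ne : Q'.toSet.Nonempty := ⟨Q'.c, Metric.mem_closedBall_self hQ'r.le⟩
  have hd2r : 2 * Q.r ≤ d := hQ1
  have hd8r : d ≤ 8 * Q.r := by
    have : d ≤ 4 * (2 * Q.r) := hQ2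
    linarith
  have hd'2r : 2 * Q'.r ≤ d' := hQ'1
  have hd'8r : d' ≤ 8 * Q'.r := by
    have : d' ≤ 4 * (2 * Q'.r) := hQ'2
    linarith
  -- nearest points
  obtain ⟨q, hqQ, hq⟩ := (isCompact_closedBall Q.c Q.r).exists_infDist_eq_dist hQne a
  obtain ⟨q', hq'Q, hq'⟩ := (isCompact_closedBall Q'.c Q'.r).exists_infDist_eq_dist hQ'ne a'
  have hdaq : dist a q = d := by rw [← hq]; exact ha
  have hd'aq : dist a' q' = d' := by rw [← hq']; exact ha'
  have hqc : dist q Q.c ≤ Q.r := Metric.mem_closedBall.mp hqQ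
  have hq'c : dist q' Q'.c ≤ Q'.r := Metric.mem_closedBall.mp hq'Q
  have hac : dist a Q.c ≤ d + Q.r := by
    calc dist a Q.c ≤ dist a q + dist q Q.c := dist_triangle _ _ _
      _ ≤ d + Q.r := by rw [hdaq]; linarith
  have ha'c : dist a' Q'.c ≤ d' + Q'.r := by
    calc dist a' Q'.c ≤ dist a' q' + dist q' Q'.c := dist_triangle _ _ _
      _ ≤ d' + Q'.r := by rw [hd'aq]; linarith
  have hcc' : dist Q.c Q'.c ≤ Q.r + Q'.r := by
    obtain ⟨x, hx1, hx2⟩ := hmeet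
    have h1 : dist x Q.c ≤ Q.r := Metric.mem_closedBall.mp hx1
    have h2 : dist x Q'.c ≤ Q'.r := Metric.mem_closedBall.mp hx2
    calc dist Q.c Q'.c ≤ dist Q.c x + dist x Q'.c := dist_triangle _ _ _
      _ ≤ Q.r + Q'.r := by rw [dist_comm Q.c x]; linarith
  -- lower bound for dist from Q.c to points of S
  have hN : ∀ y ∈ S, Q.r + d ≤ dist Q.c y := by
    intro y hy
    have h1 : d ≤ Metric.infDist y Q.toSet := by
      by_contra hcon
      push_neg at hcon
      obtain ⟨p, hp, hpd⟩ := (Metric.infDist_lt_iff hQne).mp hcon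
      have := hdle p hp y hy
      rw [dist_comm] at hpd
      linarith
    by_cases hyc : Q.r ≤ dist y Q.c
    · have h2 : Metric.infDist y (Metric.closedBall Q.c Q.r) ≤ dist y Q.c - Q.r :=
        aux_infDist_closedBall_le y Q.c Q.r hQr.le hyc
      have h3 : Metric.infDist y Q.toSet = Metric.infDist y (Metric.closedBall Q.c Q.r) := rfl
      rw [dist_comm]
      rw [h3] at h1
      linarith
    · push_neg at hyc
      have : y ∈ Q.toSet := Metric.mem_closedBall.mpr hyc.le
      have := Metric.infDist_zero_of_mem this
      linarith
  have hNa : dist Q.c a ≤ Q.r + d := by rw [dist_comm]; linarith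
  refine ⟨?_, ?_, ?_⟩
  · -- (i)
    show dist a' a ≤ 10 * Q.diam
    have : Q.diam = 2 * Q.r := rfl
    rw [this]
    calc dist a' a ≤ dist a' Q'.c + dist Q'.c a := dist_triangle _ _ _
      _ ≤ dist a' Q'.c + (dist Q'.c Q.c + dist Q.c a) := by
          linarith [dist_triangle Q'.c Q.c a]
      _ ≤ (d' + Q'.r) + ((Q.r + Q'.r) + (Q.r + d)) := by
          rw [dist_comm Q'.c Q.c]
          linarith
      _ ≤ 10 * (2 * Q.r) := by linarith
  · -- (ii)
    intro β hβ0 hβ η hη0 hη1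
    set N : ℝ := Q.r + d with hNdef
    have hN3r : 3 * Q.r ≤ N := by rw [hNdef]; linarith
    have hNpos : 0 < N := by linarith
    set R : ℝ := η * (10 * (2 * Q.r)) with hRdef
    have hRpos : 0 < R := by positivity
    have hR20r : R ≤ 20 * Q.r := by nlinarith
    set t : ℝ := min (R / (2 * N)) 1 with htdef
    have ht0 : 0 ≤ t := le_min (by positivity) zero_le_one
    have ht1 : t ≤ 1 := min_le_right _ _
    have htN : t * N = min (R / 2) N := by
      rw [htdef, min_mul_of_nonneg _ _ hNpos.le, one_mul]
      congr 1
      field_simp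
    set ρ : ℝ := β * R with hρdef
    have hρpos : 0 < ρ := by positivity
    have hρlt : ρ < t * N := by
      rw [htN]
      refine lt_min ?_ ?_
      · rw [hρdef]; nlinarith
      · rw [hρdef]
        have : β * R < (3 / 20) * R := by nlinarith
        have h2 : (3 / 20) * R ≤ 3 * Q.r := by nlinarith
        linarith
    have htNle : t * N ≤ R / 2 := by rw [htN]; exact min_le_left _ _
    set z : Fin n → ℝ := a + t • (Q.c - a) with hzdef
    clear_value N R t ρ z
    have hza : dist z a ≤ t * N := by
      have h1 : z - a = t • (Q.c - a) := by rw [hzdef]; abel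
      rw [dist_eq_norm, h1, norm_smul, Real.norm_eq_abs, abs_of_nonneg ht0]
      have h2 : ‖Q.c - a‖ = dist Q.c a := (dist_eq_norm _ _).symm
      rw [h2]
      exact mul_le_mul_of_nonneg_left hNa ht0
    have hzS : ∀ y ∈ S, t * N ≤ dist z y := by
      intro y hy
      have h1 : Q.c - z = (1 - t) • (Q.c - a) := by
        rw [hzdef, sub_smul, one_smul]; abel
      have h2 : dist Q.c z ≤ (1 - t) * N := by
        rw [dist_eq_norm, h1, norm_smul, Real.norm_eq_abs, abs_of_nonneg (by linarith)]
        have h3 : ‖Q.c - a‖ = dist Q.c a := (dist_eq_norm _ _).symm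
        rw [h3]
        exact mul_le_mul_of_nonneg_left hNa (by linarith)
      have h4 := hN y hy
      calc t * N = N - (1 - t) * N := by ring
        _ ≤ dist Q.c y - dist Q.c z := by linarith
        _ ≤ dist z y := by
            have := dist_triangle Q.c z y
            linarith
    refine ⟨PCube.mk z ρ, hρpos, ?_, ?_⟩
    · intro w hw
      have hwz : dist w z ≤ ρ := Metric.mem_closedBall.mp hw
      constructor
      · show w ∈ Metric.closedBall a (η * (10 * Q.diam))
        have hdiam : Q.diam = 2 * Q.r := rfl
        rw [Metric.mem_closedBall, hdiam]
        calc dist w a ≤ dist w z + dist z a := dist_triangle _ _ _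
          _ ≤ ρ + t * N := by linarith
          _ ≤ η * (10 * (2 * Q.r)) := by
              have h5 : ρ ≤ (3/20) * R := by rw [hρdef]; nlinarith
              linarith [hRdef.ge, hRdef.le, hRpos, htNle]
      · intro hwS
        have := hzS w hwS
        rw [dist_comm] at this
        linarith
    · show β * (2 * (η * (10 * Q.diam))) ≤ 2 * ρ
      have hdiam : Q.diam = 2 * Q.r := rfl
      rw [hdiam, hρdef, hRdef]
      ring_nf
      linarith [le_refl (β * η * Q.r * 40)]
  · -- (iii)
    intro ς hς0 hς3
    constructor
    · intro w hw
      have hwc : dist w Q.c ≤ ς * Q.r := Metric.mem_closedBall.mp hw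
      show w ∈ Metric.closedBall a (10 * Q.diam)
      have hdiam : Q.diam = 2 * Q.r := rfl
      rw [Metric.mem_closedBall, hdiam]
      calc dist w a ≤ dist w Q.c + dist Q.c a := dist_triangle _ _ _
        _ ≤ ς * Q.r + (Q.r + d) := by linarith
        _ ≤ 10 * (2 * Q.r) := by nlinarith
    · ext y
      simp only [Set.mem_inter_iff, Set.mem_empty_iff_false, iff_false, not_and]
      intro hy hyS
      have h1 : dist y Q.c ≤ ς * Q.r := Metric.mem_closedBall.mp hy
      have h2 := hN y hyS
      rw [dist_comm] at h2
      nlinarith
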